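/- Let (G,m,w,B) be a connected weighted finite graph with boundary. Then for every i = 1, 2, …, |Ω|, the (i+|B|)-th Laplacian eigenvalue dominates the i-th Dirichlet eigenvalue: μ_{i+|B|} ≥ λ_i. -/
import Mathlib


open Finset

noncomputable section

/-- The weighted graph Laplacian `Δ`. -/
def glap {V : Type*} [Fintype V] (m : V → ℝ) (w : V → V → ℝ) (u : V → ℝ) (x : V) : ℝ :=
  (1 / m x) * ∑ y, (u y - u x) * w x y

/-- Extension by zero to the boundary. -/
def E0 {V : Type*} [DecidableEq V] (B : Finset V) (u : {x : V // x ∉ B} → ℝ) (x : V) : ℝ :=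
  if h : x ∈ B then 0 else u ⟨x, h⟩

/-- The normal extension. -/
def N0 {V : Type*} [Fintype V] [DecidableEq V] (w : V → V → ℝ) (B : Finset V)
    (u : {x : V // x ∉ B} → ℝ) (x : V) : ℝ :=
  if h : x ∈ B then
    (∑ y : {x : V // x ∉ B}, u y * w x y.1) / (∑ y : {x : V // x ∉ B}, w x y.1)
  else u ⟨x, h⟩

/-- The Dirichlet Laplacian `Δ^D`. -/
def dlap {V : Type*} [Fintype V] [DecidableEq V] (m : V → ℝ) (w : V → V → ℝ) (B : Finset V)
    (u : {x : V // x ∉ B} → ℝ) (x : {x : V // x ∉ B}) : ℝ :=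
  glap m w (E0 B u) x.1

/-- The Neumann Laplacian `Δ^N`. -/
def nlap {V : Type*} [Fintype V] [DecidableEq V] (m : V → ℝ) (w : V → V → ℝ) (B : Finset V)
    (u : {x : V // x ∉ B} → ℝ) (x : {x : V // x ∉ B}) : ℝ :=
  glap m w (N0 w B u) x.1

/-- The Laplacian `Δ_Ω` of the induced interior subgraph. -/
def olap {V : Type*} [Fintype V] [DecidableEq V] (m : V → ℝ) (w : V → V → ℝ) (B : Finset V)
    (u : {x : V // x ∉ B} → ℝ) (x : {x : V // x ∉ B}) : ℝ :=
  (1 / m x.1) * ∑ y : {x : V // x ∉ B}, (u y - u x) * w x.1 y.1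

/-- The weighted boundary vertex degree `Deg_b`. -/
def degb {V : Type*} [DecidableEq V] (m : V → ℝ) (w : V → V → ℝ) (B : Finset V) (x : V) : ℝ :=
  (1 / m x) * ∑ y ∈ B, w x y

/-- The operator `T = A_B ∘ Deg⁻¹ ∘ A_Ω`. -/
def bop {V : Type*} [Fintype V] [DecidableEq V] (m : V → ℝ) (w : V → V → ℝ) (B : Finset V)
    (u : {x : V // x ∉ B} → ℝ) (z : {x : V // x ∉ B}) : ℝ :=
  (1 / m z.1) * ∑ x ∈ B, w x z.1 *
    ((∑ y : {x : V // x ∉ B}, u y * w x y.1) / (∑ y : {x : V // x ∉ B}, w x y.1))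

/-- The Bakry–Émery `Γ` operator of a Laplacian-type operator `L`. -/
def gam {W : Type*} (L : (W → ℝ) → (W → ℝ)) (f g : W → ℝ) (x : W) : ℝ :=
  (L (fun y => f y * g y) x - f x * L g x - g x * L f x) / 2

/-- The Bakry–Émery `Γ₂` operator of a Laplacian-type operator `L`. -/
def gam2 {W : Type*} (L : (W → ℝ) → (W → ℝ)) (f : W → ℝ) (x : W) : ℝ :=
  L (gam L f f) x / 2 - gam L f (L f) x

/-- `e` is a complete list of the eigenvalues of `L` : there is a corresponding eigenbasis
which is orthonormal with respect to the inner product weighted by `m`. -/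
def IsEigenBasis {n : ℕ} {W : Type*} [Fintype W] (m : W → ℝ)
    (L : (W → ℝ) → (W → ℝ)) (e : Fin n → ℝ) : Prop :=
  ∃ φ : Fin n → W → ℝ,
    (∀ i j, (∑ x, φ i x * φ j x * m x) = if i = j then 1 else 0) ∧
    ∀ i, L (φ i) = fun x => e i * φ i x

lemma sum_ortho {n N : ℕ} {W : Type*} [Fintype W] (m : W → ℝ) (φ : Fin n → W → ℝ)
    (h : ∀ p q, (∑ x, φ p x * φ q x * m x) = if p = q then 1 else 0)
    (ι : Fin N → Fin n) (hι : Function.Injective ι) (c d : Fin N → ℝ) :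
    ∑ x, (∑ j, c j * φ (ι j) x) * (∑ j, d j * φ (ι j) x) * m x = ∑ j, c j * d j := by
  calc ∑ x, (∑ j, c j * φ (ι j) x) * (∑ j, d j * φ (ι j) x) * m x
      = ∑ x, ∑ j, ∑ j', (c j * d j') * (φ (ι j) x * φ (ι j') x * m x) := by
        refine Finset.sum_congr rfl fun x _ => ?_
        rw [Finset.sum_mul_sum, Finset.sum_mul]
        refine Finset.sum_congr rfl fun j _ => ?_
        rw [Finset.sum_mul]
        exact Finset.sum_congr rfl fun j' _ => by ring
    _ = ∑ j, ∑ j', (c j * d j') * ∑ x, φ (ι j) x * φ (ι j') x * m x := by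
        rw [Finset.sum_comm]
        refine Finset.sum_congr rfl fun j _ => ?_
        rw [Finset.sum_comm]
        refine Finset.sum_congr rfl fun j' _ => ?_
        rw [Finset.mul_sum]
    _ = ∑ j, c j * d j := by
        simp only [h, hι.eq_iff, mul_ite, mul_one, mul_zero]
        simp [Finset.sum_ite_eq]

lemma glap_sum {V : Type*} [Fintype V] (m : V → ℝ) (w : V → V → ℝ)
    {ι' : Type*} [Fintype ι'] (c : ι' → ℝ) (f : ι' → V → ℝ) :
    glap m w (fun x => ∑ j, c j * f j x) = fun x => ∑ j, c j * glap m w (f j) x := by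
  funext x
  simp only [glap]
  have h1 : ∀ y, ((∑ j, c j * f j y) - (∑ j, c j * f j x)) * w x y
      = ∑ j, c j * ((f j y - f j x) * w x y) := by
    intro y
    rw [← Finset.sum_sub_distrib, Finset.sum_mul]
    exact Finset.sum_congr rfl fun j _ => by ring
  simp only [h1]
  rw [Finset.sum_comm, Finset.mul_sum]
  refine Finset.sum_congr rfl fun j _ => ?_
  rw [← Finset.mul_sum]
  ring

lemma E0_sum {V : Type*} [DecidableEq V] (B : Finset V)
    {ι' : Type*} [Fintype ι'] (c : ι' → ℝ) (f : ι' → {x : V // x ∉ B} → ℝ) :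
    E0 B (fun y => ∑ j, c j * f j y) = fun x => ∑ j, c j * E0 B (f j) x := by
  funext x
  simp only [E0]
  split <;> simp

lemma dlap_sum {V : Type*} [Fintype V] [DecidableEq V] (m : V → ℝ) (w : V → V → ℝ) (B : Finset V)
    {ι' : Type*} [Fintype ι'] (c : ι' → ℝ) (f : ι' → {x : V // x ∉ B} → ℝ) :
    dlap m w B (fun y => ∑ j, c j * f j y) = fun x => ∑ j, c j * dlap m w B (f j) x := by
  funext x
  simp only [dlap, E0_sum]
  rw [glap_sum]

theorem stmt_12 {V : Type*} [Fintype V] [DecidableEq V]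
    (G : SimpleGraph V) (hconn : G.Connected)
    (m : V → ℝ) (hm : ∀ x, 0 < m x)
    (w : V → V → ℝ) (hwsymm : ∀ x y, w x y = w y x)
    (hwpos : ∀ x y, G.Adj x y → 0 < w x y)
    (hw0 : ∀ x y, ¬ G.Adj x y → w x y = 0)
    (B : Finset V) (hB : B.Nonempty)
    (hBB : ∀ x ∈ B, ∀ y ∈ B, ¬ G.Adj x y)
    (hBint : ∀ x ∈ B, ∃ y, y ∉ B ∧ G.Adj x y)
    (μ : Fin (Fintype.card V) → ℝ) (hμmono : Monotone μ)
    (hμ : IsEigenBasis m (glap m w) (fun i => -(μ i)))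
    (lam : Fin (Fintype.card {x : V // x ∉ B}) → ℝ) (hlammono : Monotone lam)
    (hlam : IsEigenBasis (fun x : {x : V // x ∉ B} => m x.1) (dlap m w B) (fun i => -(lam i)))
    (hcard : Fintype.card {x : V // x ∉ B} + B.card = Fintype.card V)
    :
    ∀ i : Fin (Fintype.card {x : V // x ∉ B}), lam i ≤ μ ⟨i.1 + B.card, by have h2 := i.2; omega⟩ := by
  classical
  intro i
  obtain ⟨φ, hφo, hφe⟩ := hμ
  obtain ⟨ψ, hψo, hψe⟩ := hlam
  have hik : i.1 < Fintype.card {x : V // x ∉ B} := i.2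
  have hNn : ∀ j : Fin (i.1 + B.card + 1), j.1 < Fintype.card V := fun j => by
    have := j.2; omega
  let ι : Fin (i.1 + B.card + 1) → Fin (Fintype.card V) := fun j => ⟨j.1, hNn j⟩
  have hιinj : Function.Injective ι := fun a b h => by
    apply Fin.ext; simpa [ι, Fin.ext_iff] using h
  let M : Matrix (↥B ⊕ Fin i.1) (Fin (i.1 + B.card + 1)) ℝ := fun z j =>
    Sum.rec (fun x => φ (ι j) x.1)
      (fun l => ∑ y : {x : V // x ∉ B}, φ (ι j) y.1 * ψ ⟨l.1, lt_trans l.2 hik⟩ y * m y.1) z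
  obtain ⟨c, hc0, hcK⟩ : ∃ c : Fin (i.1 + B.card + 1) → ℝ, c ≠ 0 ∧ M.mulVec c = 0 := by
    have hninj : ¬ Function.Injective M.mulVecLin := by
      intro hinj
      have h2 := LinearMap.finrank_le_finrank_of_injective hinj
      simp only [Module.finrank_fintype_fun_eq_card, Fintype.card_fin, Fintype.card_sum,
        Fintype.card_coe] at h2
      omega
    rw [← LinearMap.ker_eq_bot] at hninj
    obtain ⟨c, hc, hc0⟩ := Submodule.exists_mem_ne_zero_of_ne_bot hninj
    refine ⟨c, hc0, ?_⟩
    rw [← Matrix.mulVecLin_apply]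
    exact LinearMap.mem_ker.mp hc
  let u : V → ℝ := fun x => ∑ j, c j * φ (ι j) x
  have huB : ∀ x ∈ B, u x = 0 := by
    intro x hx
    have h := congrFun hcK (Sum.inl ⟨x, hx⟩)
    simp only [Matrix.mulVec, dotProduct, Pi.zero_apply, M] at h
    calc u x = ∑ j, φ (ι j) x * c j := Finset.sum_congr rfl fun j _ => mul_comm _ _
    _ = 0 := h
  let v : {x : V // x ∉ B} → ℝ := fun x => u x.1
  have hE0v : E0 B v = u := by
    funext x
    simp only [E0]
    split
    · exact (huB x ‹_›).symm
    · rfl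
  have hvψ : ∀ l : Fin (Fintype.card {x : V // x ∉ B}), l.1 < i.1 →
      (∑ x : {x : V // x ∉ B}, v x * ψ l x * m x.1) = 0 := by
    intro l hl
    have h := congrFun hcK (Sum.inr ⟨l.1, hl⟩)
    simp only [Matrix.mulVec, dotProduct, Pi.zero_apply, M] at h
    have hll : (⟨(⟨l.1, hl⟩ : Fin i.1).1, lt_trans (⟨l.1, hl⟩ : Fin i.1).2 hik⟩ :
        Fin (Fintype.card {x : V // x ∉ B})) = l := Fin.eta l _
    rw [hll] at h
    calc ∑ x : {x : V // x ∉ B}, v x * ψ l x * m x.1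
        = ∑ x : {x : V // x ∉ B}, ∑ j, (φ (ι j) x.1 * ψ l x * m x.1) * c j := by
          refine Finset.sum_congr rfl fun x _ => ?_
          show (∑ j, c j * φ (ι j) x.1) * ψ l x * m x.1 = _
          rw [Finset.sum_mul, Finset.sum_mul]
          exact Finset.sum_congr rfl fun j _ => by ring
      _ = ∑ j, (∑ x : {x : V // x ∉ B}, φ (ι j) x.1 * ψ l x * m x.1) * c j := by
          rw [Finset.sum_comm]
          exact Finset.sum_congr rfl fun j _ => (Finset.sum_mul _ _ _).symm
      _ = 0 := h
  haveI : Nonempty (Fin (Fintype.card {x : V // x ∉ B})) := ⟨i⟩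
  have hψli : LinearIndependent ℝ ψ := by
    rw [Fintype.linearIndependent_iff]
    intro g hg l
    have key := sum_ortho (fun x : {x : V // x ∉ B} => m x.1) ψ hψo id Function.injective_id
      g (fun p => if p = l then 1 else 0)
    simp only [id_eq] at key
    rw [show (∑ j, g j * if j = l then 1 else 0) = g l by simp] at key
    rw [← key]
    refine Finset.sum_eq_zero fun x _ => ?_
    have hz : (∑ j, g j * ψ j x) = 0 := by
      have := congrFun hg x
      simpa [Finset.sum_apply] using this
    rw [hz]
    ring
  have hfr : Fintype.card (Fin (Fintype.card {x : V // x ∉ B}))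
      = Module.finrank ℝ ({x : V // x ∉ B} → ℝ) := by
    simp [Module.finrank_fintype_fun_eq_card]
  let bΨ := basisOfLinearIndependentOfCardEqFinrank hψli hfr
  let d : Fin (Fintype.card {x : V // x ∉ B}) → ℝ := fun l => bΨ.repr v l
  have hvd : ∀ x, v x = ∑ l, d l * ψ l x := by
    intro x
    have h := congrFun (bΨ.sum_repr v) x
    rw [← h, Finset.sum_apply]
    refine Finset.sum_congr rfl fun l _ => ?_
    rw [Pi.smul_apply, smul_eq_mul,
      congrFun (coe_basisOfLinearIndependentOfCardEqFinrank hψli hfr) l]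
  have hdip : ∀ l, (∑ x : {x : V // x ∉ B}, v x * ψ l x * m x.1) = d l := by
    intro l
    have key := sum_ortho (fun x : {x : V // x ∉ B} => m x.1) ψ hψo id Function.injective_id
      d (fun p => if p = l then 1 else 0)
    simp only [id_eq] at key
    rw [show (∑ j, d j * if j = l then 1 else 0) = d l by simp] at key
    rw [← key]
    refine Finset.sum_congr rfl fun x _ => ?_
    rw [hvd x]
    have h2 : (∑ j, (if j = l then (1:ℝ) else 0) * ψ j x) = ψ l x := by
      simp [ite_mul]
    rw [h2]
  have hd0 : ∀ l : Fin (Fintype.card {x : V // x ∉ B}), l.1 < i.1 → d l = 0 := by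
    intro l hl
    rw [← hdip l]
    exact hvψ l hl
  have hSpos : 0 < ∑ j, c j * c j := by
    obtain ⟨j0, hj0⟩ : ∃ j, c j ≠ 0 := by
      by_contra h; push_neg at h; exact hc0 (funext h)
    exact Finset.sum_pos' (fun j _ => mul_self_nonneg _)
      ⟨j0, Finset.mem_univ _, mul_self_pos.mpr hj0⟩
  have hU : (∑ x, u x * u x * m x) = ∑ j, c j * c j := sum_ortho m φ hφo ι hιinj c c
  have hglapu : ∀ x, glap m w u x = ∑ j, (c j * -(μ (ι j))) * φ (ι j) x := by
    intro x
    show glap m w (fun x => ∑ j, c j * φ (ι j) x) x = _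
    rw [glap_sum]
    refine Finset.sum_congr rfl fun j _ => ?_
    simp only [hφe]
    ring
  have hE1 : (∑ x, glap m w u x * u x * m x) = ∑ j, (c j * -(μ (ι j))) * c j := by
    have key := sum_ortho m φ hφo ι hιinj (fun j => c j * -(μ (ι j))) c
    rw [← key]
    refine Finset.sum_congr rfl fun x _ => ?_
    rw [hglapu x]
  have hdlapv : ∀ x, dlap m w B v x = ∑ l, (d l * -(lam l)) * ψ l x := by
    intro x
    have h : dlap m w B v = dlap m w B (fun y => ∑ l, d l * ψ l y) :=
      congrArg (dlap m w B) (funext hvd)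
    rw [h, dlap_sum]
    refine Finset.sum_congr rfl fun l _ => ?_
    simp only [hψe]
    ring
  have hE2 : (∑ x : {x : V // x ∉ B}, dlap m w B v x * v x * m x.1)
      = ∑ l, (d l * -(lam l)) * d l := by
    have key := sum_ortho (fun x : {x : V // x ∉ B} => m x.1) ψ hψo id Function.injective_id
      (fun l => d l * -(lam l)) d
    simp only [id_eq] at key
    rw [← key]
    refine Finset.sum_congr rfl fun x _ => ?_
    rw [hdlapv x, hvd x]
  have hsplit : ∀ g : V → ℝ, (∀ x ∈ B, g x = 0) →
      (∑ x : {x : V // x ∉ B}, g x.1) = ∑ x, g x := by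
    intro g hg
    rw [← Finset.sum_subtype Bᶜ (fun x => Finset.mem_compl) g]
    exact Finset.sum_subset (Finset.subset_univ _) (fun x _ hx => hg x (by simpa using hx))
  have hVU : (∑ x : {x : V // x ∉ B}, v x * v x * m x.1) = ∑ j, c j * c j := by
    have h := hsplit (fun x => u x * u x * m x) (fun x hx => by show u x * u x * m x = 0; rw [huB x hx]; ring)
    exact h.trans hU
  have hE3 : (∑ x : {x : V // x ∉ B}, dlap m w B v x * v x * m x.1)
      = ∑ x, glap m w u x * u x * m x := by
    have h := hsplit (fun x => glap m w u x * u x * m x)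
      (fun x hx => by show glap m w u x * u x * m x = 0; rw [huB x hx]; ring)
    refine Eq.trans ?_ h
    refine Finset.sum_congr rfl fun x _ => ?_
    have hx : dlap m w B v x = glap m w u x.1 := by
      simp only [dlap, hE0v]
    rw [hx]
  have hD : (∑ l, d l * d l) = ∑ j, c j * c j := by
    have key := sum_ortho (fun x : {x : V // x ∉ B} => m x.1) ψ hψo id Function.injective_id d d
    simp only [id_eq] at key
    have hvv : (∑ x : {x : V // x ∉ B}, v x * v x * m x.1) = ∑ l, d l * d l := by
      rw [← key]
      refine Finset.sum_congr rfl fun x _ => ?_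
      rw [hvd x]
    exact hvv.symm.trans hVU
  have hmain : (∑ j, μ (ι j) * (c j * c j)) = ∑ l, lam l * (d l * d l) := by
    have h := hE1.symm.trans (hE3.symm.trans hE2)
    have h1 : (∑ j, (c j * -(μ (ι j))) * c j) = -∑ j, μ (ι j) * (c j * c j) := by
      rw [← Finset.sum_neg_distrib]
      exact Finset.sum_congr rfl fun j _ => by ring
    have h2 : (∑ l, (d l * -(lam l)) * d l) = -∑ l, lam l * (d l * d l) := by
      rw [← Finset.sum_neg_distrib]
      exact Finset.sum_congr rfl fun l _ => by ring
    rw [h1, h2] at h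
    linarith
  have htop : i.1 + B.card < Fintype.card V := by omega
  have hub : (∑ j, μ (ι j) * (c j * c j)) ≤ μ ⟨i.1 + B.card, htop⟩ * ∑ j, c j * c j := by
    rw [Finset.mul_sum]
    refine Finset.sum_le_sum fun j _ => ?_
    refine mul_le_mul_of_nonneg_right (hμmono ?_) (mul_self_nonneg _)
    have := j.2
    simp only [ι, Fin.mk_le_mk]
    omega
  have hlb : lam i * (∑ l, d l * d l) ≤ ∑ l, lam l * (d l * d l) := by
    rw [Finset.mul_sum]
    refine Finset.sum_le_sum fun l _ => ?_
    by_cases hl : l.1 < i.1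
    · rw [hd0 l hl]
      simp
    · refine mul_le_mul_of_nonneg_right (hlammono ?_) (mul_self_nonneg _)
      rw [Fin.le_def]
      omega
  have hfinal : lam i * (∑ j, c j * c j) ≤ μ ⟨i.1 + B.card, htop⟩ * ∑ j, c j * c j := by
    calc lam i * (∑ j, c j * c j) = lam i * ∑ l, d l * d l := by rw [hD]
    _ ≤ ∑ l, lam l * (d l * d l) := hlb
    _ = ∑ j, μ (ι j) * (c j * c j) := hmain.symm
    _ ≤ _ := hub
  exact le_of_mul_le_mul_right hfinal hSpos
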